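/- In the firing-squad model with epistemic state ({(M,u₁), …, (M,u₁₀)}, Pr), where in context u_j marksman j has the live bullet and all ten marksmen shoot, and Pr((M,u_j)) = p_j: the degree of responsibility dr((M_{S₁←1}, u_j), S₁ = 1, D = 1) equals 1 if j = 1 and 0 if j ≠ 1, and hence the degree of blame of marksman 1's shot for the death, db(K, Pr, S₁←1, D = 1), equals p₁. -/

import Mathlib

open Classical

/-- A causal model over exogenous variables `U` and endogenous variables `V`,
with integer-valued variables.  `Rexo Y` / `R X` are the (intended) ranges of
the variables, and `F X` is the structural equation for the endogenous
variable `X`, giving its value as a function of the values of all other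
variables. -/
structure CausalModel (U V : Type) where
  Rexo : U → Set ℤ
  R : V → Set ℤ
  F : V → (U → ℤ) → (V → ℤ) → ℤ

namespace CausalModel

variable {U V : Type}

/-- A causal model is recursive if the variables can be ordered so that each
structural equation depends only on the values of strictly earlier endogenous
variables (equivalently, the dependency graph is acyclic). -/
def Recursive (M : CausalModel U V) : Prop :=
  ∃ ord : V → ℕ, ∀ (X : V) (u : U → ℤ) (g g' : V → ℤ),
    (∀ Y, ord Y < ord X → g Y = g' Y) → M.F X u g = M.F X u g'

/-- `s` simultaneously satisfies all the structural equations in context `u`. -/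
def IsSolution (M : CausalModel U V) (u : U → ℤ) (s : V → ℤ) : Prop :=
  ∀ X, s X = M.F X u s

/-- The (unique, for recursive models) solution of the equations in context `u`. -/
noncomputable def solution (M : CausalModel U V) (u : U → ℤ) : V → ℤ :=
  Classical.epsilon fun s => M.IsSolution u s

/-- The model `M_{A ← y}` obtained by replacing the equations of the variables
in `A` by the constant values given by `y`. -/
noncomputable def intervene (M : CausalModel U V) (A : Set V) (y : V → ℤ) :
    CausalModel U V where
  Rexo := M.Rexo
  R := M.R
  F := fun X u g => if X ∈ A then y X else M.F X u g

end CausalModel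

/-- Boolean combinations of primitive events `X = x`. -/
inductive CausalFormula (V : Type) where
  | tru : CausalFormula V
  | eq : V → ℤ → CausalFormula V
  | not : CausalFormula V → CausalFormula V
  | and : CausalFormula V → CausalFormula V → CausalFormula V
  | or : CausalFormula V → CausalFormula V → CausalFormula V
  | iff : CausalFormula V → CausalFormula V → CausalFormula V

/-- Truth of a causal formula under an assignment to the endogenous variables. -/
def CausalFormula.holds {V : Type} (s : V → ℤ) : CausalFormula V → Prop
  | tru => True
  | eq X x => s X = x
  | not φ => ¬ φ.holds s
  | and φ χ => φ.holds s ∧ χ.holds s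
  | or φ χ => φ.holds s ∨ χ.holds s
  | iff φ χ => φ.holds s ↔ χ.holds s

/-- `(M,u) ⊨ [A ← y] φ` : `φ` holds in the unique solution of `M_{A ← y}` in
context `u`. -/
def sat {U V : Type} (M : CausalModel U V) (u : U → ℤ) (A : Set V) (y : V → ℤ)
    (φ : CausalFormula V) : Prop :=
  φ.holds ((M.intervene A y).solution u)

/-- Condition AC2 of the Halpern–Pearl definition of causality, for the single
conjunct `X = x`, witnessed by the partition `(Wᶜ, W)` (so `Z = Wᶜ ∋ X`) and
the setting `(x', w')` of `(X, W)`. -/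
def AC2 {U V : Type} (M : CausalModel U V) (u : U → ℤ) (X : V) (x : ℤ)
    (φ : CausalFormula V) (W : Set V) (x' : ℤ) (w' : V → ℤ) : Prop :=
  X ∉ W ∧ x' ∈ M.R X ∧ (∀ Y ∈ W, w' Y ∈ M.R Y) ∧
  -- AC2(a): (M,u) ⊨ [X ← x', W ← w'] ¬φ
  ¬ sat M u (insert X W) (fun Y => if Y = X then x' else w' Y) φ ∧
  -- AC2(b): (M,u) ⊨ [X ← x, W ← w', Z' ← z*] φ for all subsets Z' of Z = Wᶜ
  ∀ Z' : Set V, Z' ⊆ Wᶜ →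
    sat M u (insert X (W ∪ Z'))
      (fun Y => if Y = X then x else if Y ∈ W then w' Y else M.solution u Y) φ

/-- `X = x` is a cause of `φ` in `(M,u)`: AC1 together with AC2 (AC3 is
automatic for single conjuncts). -/
def IsCause {U V : Type} (M : CausalModel U V) (u : U → ℤ) (X : V) (x : ℤ)
    (φ : CausalFormula V) : Prop :=
  (M.solution u X = x ∧ φ.holds (M.solution u)) ∧
  ∃ W x' w', AC2 M u X x φ W x' w'

/-- The degree of responsibility of `X = x` for `φ` in `(M,u)` : `0` if
`X = x` is not a cause of `φ`, and otherwise `1/(k+1)` where `k` is the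
minimal, over all AC2 witnesses, number of variables of `W` whose value in
`w'` differs from their value in the unique solution of `(M,u)`. -/
noncomputable def dr {U V : Type} (M : CausalModel U V) (u : U → ℤ) (X : V)
    (x : ℤ) (φ : CausalFormula V) : ℚ :=
  if IsCause M u X x φ then
    1 / ((sInf {k : ℕ | ∃ W x' w', AC2 M u X x φ W x' w' ∧
        {Y | Y ∈ W ∧ w' Y ≠ M.solution u Y}.ncard = k} : ℕ) + 1 : ℚ)
  else 0

/-- The degree of blame of setting `X` to `x` for `φ`, relative to the
epistemic state given by the (indexed) finite set of situations
`(Mod i, ctx i)` with probabilities `Pr i` : the expected degree of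
responsibility of `X = x` for `φ` in the situations `((Mod i)_{X ← x}, ctx i)`. -/
noncomputable def db {U V ι : Type} [Fintype ι] (Mod : ι → CausalModel U V)
    (ctx : ι → U → ℤ) (Pr : ι → ℚ) (X : V) (x : ℤ) (φ : CausalFormula V) : ℚ :=
  ∑ i, dr ((Mod i).intervene {X} (fun _ => x)) (ctx i) X x φ * Pr i

/-- The firing-squad model: ten marksmen `S₁, …, S₁₀` (here `Sum.inl i` for
`i : Fin 10`) and the prisoner's death `D` (here `Sum.inr ()`).  The
exogenous context determines which marksman `j` has the live bullet (encoded
as `u () = j + 1`); all marksmen shoot (`F_{Sᵢ} = 1`), and `D = S_j`. -/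
def squadModel : CausalModel Unit (Fin 10 ⊕ Unit) where
  Rexo := fun _ => {z : ℤ | 1 ≤ z ∧ z ≤ 10}
  R := fun _ => {0, 1}
  F := fun X u g =>
    match X with
    | Sum.inl _ => 1
    | Sum.inr _ =>
        if ∃ i : Fin 10, (i : ℤ) + 1 = u () ∧ g (Sum.inl i) = 1 then 1 else 0

/-- The context in which marksman `j` (zero-indexed: `j = 0` is marksman 1)
has the live bullet. -/
def squadCtx (j : Fin 10) : Unit → ℤ := fun _ => (j : ℤ) + 1

namespace SquadProof

noncomputable def M' : CausalModel Unit (Fin 10 ⊕ Unit) :=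
  squadModel.intervene {Sum.inl 0} (fun _ => 1)

/-- The explicit solution of `M'.intervene A y`. -/
noncomputable def sq (A : Set (Fin 10 ⊕ Unit)) (y : (Fin 10 ⊕ Unit) → ℤ)
    (u : Unit → ℤ) : (Fin 10 ⊕ Unit) → ℤ := fun X =>
  match X with
  | Sum.inl i => if Sum.inl i ∈ A then y (Sum.inl i) else 1
  | Sum.inr _ => if Sum.inr () ∈ A then y (Sum.inr ()) else
      if ∃ i : Fin 10, (i : ℤ) + 1 = u () ∧
          (if Sum.inl i ∈ A then y (Sum.inl i) else 1) = 1 then 1 else 0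

lemma sq_inl (A y u) (i : Fin 10) :
    sq A y u (Sum.inl i) = if Sum.inl i ∈ A then y (Sum.inl i) else 1 := rfl

lemma sq_inr (A y u) :
    sq A y u (Sum.inr ()) = if Sum.inr () ∈ A then y (Sum.inr ()) else
      if ∃ i : Fin 10, (i : ℤ) + 1 = u () ∧
          (if Sum.inl i ∈ A then y (Sum.inl i) else 1) = 1 then 1 else 0 := rfl

lemma solution_eq_of_unique {U V : Type} (N : CausalModel U V) (u : U → ℤ)
    (s : V → ℤ) (hs : N.IsSolution u s)
    (huniq : ∀ t, N.IsSolution u t → t = s) : N.solution u = s :=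
  huniq _ (Classical.epsilon_spec (⟨s, hs⟩ : ∃ t, N.IsSolution u t))

lemma F_inl (A y) (u : Unit → ℤ) (i : Fin 10) (g) :
    (M'.intervene A y).F (Sum.inl i) u g =
      if Sum.inl i ∈ A then y (Sum.inl i) else 1 := by
  simp [M', CausalModel.intervene, squadModel]

lemma F_inr (A y) (u : Unit → ℤ) (g) :
    (M'.intervene A y).F (Sum.inr ()) u g =
      if Sum.inr () ∈ A then y (Sum.inr ()) else
        if ∃ i : Fin 10, (i : ℤ) + 1 = u () ∧ g (Sum.inl i) = 1 then 1
        else 0 := by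
  simp [M', CausalModel.intervene, squadModel]

lemma sol_sq (A y u) : (M'.intervene A y).solution u = sq A y u := by
  apply solution_eq_of_unique _ _ _ ?hs
  · intro t ht
    have hl : ∀ i : Fin 10,
        t (Sum.inl i) = if Sum.inl i ∈ A then y (Sum.inl i) else 1 := by
      intro i; have := ht (Sum.inl i); rwa [F_inl] at this
    funext X
    cases X with
    | inl i => rw [hl i, sq_inl]
    | inr tt =>
        cases tt
        have := ht (Sum.inr ())
        rw [F_inr] at this
        rw [this, sq_inr]
        simp only [hl]
  · intro X
    cases X with
    | inl i => rw [F_inl, sq_inl]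
    | inr tt =>
        cases tt
        rw [F_inr, sq_inr]
        simp only [sq_inl]
        congr

lemma intervene_empty {U V : Type} (M : CausalModel U V) (y : V → ℤ) :
    M.intervene ∅ y = M := by
  cases M; simp [CausalModel.intervene]

lemma sol_M' (u : Unit → ℤ) : M'.solution u = sq ∅ (fun _ => 0) u := by
  conv_lhs => rw [← intervene_empty M' (fun _ => 0)]
  exact sol_sq _ _ _

lemma coe_inj (i j : Fin 10) : ((i : ℤ) + 1 = (j : ℤ) + 1) ↔ i = j := by
  rw [add_left_inj, Int.natCast_inj, Fin.val_inj]

lemma sol_M'_all (j : Fin 10) : M'.solution (squadCtx j) = fun _ => 1 := by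
  rw [sol_M']
  funext X
  cases X with
  | inl i => simp [sq_inl]
  | inr tt =>
      cases tt
      rw [sq_inr]
      simp only [Set.mem_empty_iff_false, if_false]
      rw [if_pos ⟨j, rfl, trivial⟩]

lemma sat_iff (u : Unit → ℤ) (A y) :
    sat M' u A y (CausalFormula.eq (Sum.inr ()) 1) ↔ sq A y u (Sum.inr ()) = 1 := by
  unfold sat
  rw [sol_sq]
  rfl

end SquadProof

open SquadProof

/-- In the firing-squad model, relative to the epistemic state giving
probability `Pr j` to the context in which marksman `j` has the live bullet:
the degree of responsibility of marksman 1's shot `S₁ = 1` for the death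
`D = 1` is `1` in the context where he has the bullet and `0` otherwise, and
hence his degree of blame for the death is `p₁ = Pr 0`. -/
theorem squad_blame (Pr : Fin 10 → ℚ) (hPr : ∀ j, 0 ≤ Pr j)
    (hPr1 : ∑ j, Pr j = 1) :
    (∀ j : Fin 10,
      dr (squadModel.intervene {Sum.inl 0} fun _ => 1) (squadCtx j)
          (Sum.inl 0) 1 (CausalFormula.eq (Sum.inr ()) 1)
        = if j = 0 then 1 else 0) ∧
    db (fun _ : Fin 10 => squadModel) squadCtx Pr
        (Sum.inl 0) 1 (CausalFormula.eq (Sum.inr ()) 1) = Pr 0 := by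
  have hXne : ∀ i : Fin 10, i ≠ 0 → Sum.inl i ≠ (Sum.inl 0 : Fin 10 ⊕ Unit) := by
    intro i hi h
    exact hi (Sum.inl.inj h)
  have hdr : ∀ j : Fin 10,
      dr M' (squadCtx j) (Sum.inl 0) 1 (CausalFormula.eq (Sum.inr ()) 1)
        = if j = 0 then 1 else 0 := by
    intro j
    by_cases hj : j = 0
    · subst hj
      rw [if_pos rfl]
      have hAC2 : AC2 M' (squadCtx 0) (Sum.inl 0) 1
          (CausalFormula.eq (Sum.inr ()) 1) ∅ 0 (fun _ => 0) := by
        refine ⟨by simp, ?_, by simp, ?_, ?_⟩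
        · simp [M', CausalModel.intervene, squadModel]
        · rw [sat_iff, sq_inr]
          rw [if_neg (by simp), if_neg]
          · norm_num
          · rintro ⟨i, h1, h2⟩
            have hi : i = 0 := (coe_inj i 0).mp h1
            subst hi
            simp at h2
        · intro Z' hZ'
          rw [sat_iff, sq_inr]
          by_cases h : Sum.inr () ∈ insert (Sum.inl 0 : Fin 10 ⊕ Unit) (∅ ∪ Z')
          · rw [if_pos h]
            simp [sol_M'_all]
          · rw [if_neg h, if_pos]
            refine ⟨0, rfl, ?_⟩
            rw [if_pos (Set.mem_insert _ _), if_pos rfl]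
      have hcause : IsCause M' (squadCtx 0) (Sum.inl 0) 1
          (CausalFormula.eq (Sum.inr ()) 1) := by
        refine ⟨⟨?_, ?_⟩, ∅, 0, fun _ => 0, hAC2⟩
        · rw [sol_M'_all]
        · show M'.solution (squadCtx 0) (Sum.inr ()) = 1
          rw [sol_M'_all]
      rw [dr, if_pos hcause]
      have h0 : sInf {k : ℕ | ∃ W x' w', AC2 M' (squadCtx 0) (Sum.inl 0) 1
          (CausalFormula.eq (Sum.inr ()) 1) W x' w' ∧
          {Y | Y ∈ W ∧ w' Y ≠ M'.solution (squadCtx 0) Y}.ncard = k} = 0 := by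
        refine Nat.sInf_eq_zero.mpr (Or.inl ⟨∅, 0, fun _ => 0, hAC2, ?_⟩)
        simp
      rw [h0]
      norm_num
    · rw [if_neg hj]
      rw [dr, if_neg]
      rintro ⟨-, W, x', w', hXW, -, -, ha, hb⟩
      have hbe := hb ∅ (Set.empty_subset _)
      rw [sat_iff, sq_inr] at ha hbe
      by_cases hD : Sum.inr () ∈ W
      · rw [if_pos (Set.mem_insert_of_mem _ (Set.mem_union_left _ hD)),
          if_neg (by simp), if_pos hD] at hbe
        apply ha
        rw [if_pos (Set.mem_insert_of_mem _ hD), if_neg (by simp)]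
        exact hbe
      · have hinra : Sum.inr () ∉ insert (Sum.inl 0 : Fin 10 ⊕ Unit) W := by
          simp [hD]
        have hinrb : Sum.inr () ∉ insert (Sum.inl 0 : Fin 10 ⊕ Unit) (W ∪ ∅) := by
          simp [hD]
        by_cases hj2 : Sum.inl j ∈ W
        · rw [if_neg hinrb] at hbe
          split at hbe
          · next hc =>
              obtain ⟨i, h1, h2⟩ := hc
              have hi : i = j := (coe_inj i j).mp h1
              subst hi
              rw [if_pos (Set.mem_insert_of_mem _ (Set.mem_union_left _ hj2)),
                if_neg (hXne i hj), if_pos hj2] at h2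
              apply ha
              rw [if_neg hinra, if_pos]
              refine ⟨i, rfl, ?_⟩
              rw [if_pos (Set.mem_insert_of_mem _ hj2), if_neg (hXne i hj)]
              exact h2
          · norm_num at hbe
        · apply ha
          rw [if_neg hinra, if_pos]
          refine ⟨j, rfl, ?_⟩
          rw [if_neg]
          simp [hXne j hj, hj2]
  constructor
  · intro j
    exact hdr j
  · rw [db]
    have hterm : ∀ i : Fin 10,
        dr (((fun _ : Fin 10 => squadModel) i).intervene {Sum.inl 0} fun _ => 1)
          (squadCtx i) (Sum.inl 0) 1 (CausalFormula.eq (Sum.inr ()) 1) * Pr i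
        = (if i = 0 then 1 else 0) * Pr i := by
      intro i
      rw [show (((fun _ : Fin 10 => squadModel) i).intervene {Sum.inl 0}
        fun _ => 1) = M' from rfl, hdr i]
    rw [Finset.sum_congr rfl (fun i _ => hterm i)]
    simp
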